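/- Let σ_i ∈ ℝ, 1 ≤ q_i ≤ ∞, and 1 ≤ p_i ≤ u_i < ∞ or p_i = u_i = ∞, i = 1,2. For j ∈ ℕ₀ define Id_j: ñ^{σ₁}_{u₁,p₁,q₁} → ñ^{σ₂}_{u₂,p₂,q₂} by (Id_j λ)_{i,k} = λ_{j,k} if i = j and (Id_j λ)_{i,k} = 0 if i ≠ j. Set δ = σ₁ − σ₂ − d/u₁ + d/u₂. Then there is a constant C independent of j such that every Id_j is nuclear with ν(Id_j) ≤ C · 2^{−jδ} · 2^{jd(1 − (1/u₁ − min{1, p₂/p₁}/u₂)₊)}, where a₊ = max{a,0}. -/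

import Mathlib

open scoped ENNReal

/-- Sequences `λ = (λ_{j,m})` indexed by `j ∈ ℕ₀` and the dyadic cubes
`Q_{j,m} ⊆ Q = [0,1)^d` of side length `2^{-j}`, the latter encoded by
`m : Fin d → Fin (2^j)`. -/
abbrev DSeq (d : ℕ) := ∀ j : ℕ, (Fin d → Fin (2 ^ j)) → ℂ

/-- `Q_{j,m} ⊆ Q_{ν,k}` for `ν ≤ j` (cubes inside the unit cube): the condition is
`m i / 2^(j-ν) = k i` for all `i`. -/
def cubeLE {d j : ℕ} (ν : ℕ) (m : Fin d → Fin (2 ^ j)) (k : Fin d → ℕ) : Prop :=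
  ∀ i, (m i : ℕ) / 2 ^ (j - ν) = k i

instance {d j : ℕ} (ν : ℕ) (m : Fin d → Fin (2 ^ j)) (k : Fin d → ℕ) :
    Decidable (cubeLE ν m k) := by unfold cubeLE; infer_instance

/-- The `j`-th level of the Morrey sequence space norm:
`sup_{0 ≤ ν ≤ j, Q_{ν,k} ⊆ Q} 2^{d(j-ν)(1/u - 1/p)} (∑_{m : Q_{j,m} ⊆ Q_{ν,k}} |λ_{j,m}|^p)^{1/p}`,
with the sup over `m` instead of the `p`-sum when `p = ∞`. -/
noncomputable def levelNorm (d j : ℕ) (u p : ℝ≥0∞)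
    (f : (Fin d → Fin (2 ^ j)) → ℂ) : ℝ≥0∞ :=
  ⨆ ν : Fin (j + 1), ⨆ k : Fin d → Fin (2 ^ (ν : ℕ)),
    (2 : ℝ≥0∞) ^ (((d * (j - (ν : ℕ)) : ℕ) : ℝ) * ((u⁻¹).toReal - (p⁻¹).toReal)) *
      (if p = ∞ then
        ⨆ m : {m : Fin d → Fin (2 ^ j) // cubeLE (ν : ℕ) m fun i => (k i : ℕ)},
          (‖f m‖₊ : ℝ≥0∞)
       else
        (∑ m : Fin d → Fin (2 ^ j),
          if cubeLE (ν : ℕ) m (fun i => (k i : ℕ)) then (‖f m‖₊ : ℝ≥0∞) ^ p.toReal else 0)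
          ^ (1 / p.toReal))

/-- The (extended-real-valued) norm of the Morrey sequence space `ñ^σ_{u,p,q}`:
`‖λ‖ = (∑_j 2^{jq(σ - d/u)} [level_j(λ)]^q)^{1/q}`, with the sup over `j` when `q = ∞`.
A sequence belongs to `ñ^σ_{u,p,q}` iff this norm is finite. -/
noncomputable def nNorm (d : ℕ) (σ : ℝ) (u p q : ℝ≥0∞) (lam : DSeq d) : ℝ≥0∞ :=
  if q = ∞ then
    ⨆ j : ℕ, (2 : ℝ≥0∞) ^ ((j : ℝ) * (σ - d * (u⁻¹).toReal)) * levelNorm d j u p (lam j)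
  else
    (∑' j : ℕ, ((2 : ℝ≥0∞) ^ ((j : ℝ) * (σ - d * (u⁻¹).toReal)) *
        levelNorm d j u p (lam j)) ^ q.toReal) ^ (1 / q.toReal)

/-- The dual norm of a linear functional `f` with respect to the norm
`nNorm d σ u p q` (defined on the subspace of finite norm). -/
noncomputable def nDualNorm (d : ℕ) (σ : ℝ) (u p q : ℝ≥0∞)
    (f : DSeq d →ₗ[ℂ] ℂ) : ℝ :=
  sInf {C : ℝ | 0 ≤ C ∧ ∀ lam : DSeq d,
    nNorm d σ u p q lam ≠ ∞ → ‖f lam‖ ≤ C * (nNorm d σ u p q lam).toReal}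

/-- A nuclear representation of a linear operator `T` from `ñ^{σ₁}_{u₁,p₁,q₁}` to
`ñ^{σ₂}_{u₂,p₂,q₂}`: functionals `a n` (bounded on the source space, measured in the
dual norm) and elements `y n` of the target space with summable norm products, such
that for each `λ` in the source space the partial sums `∑_{n<N} a_n(λ) y_n` converge
to `T λ` in the target norm. -/
def IsNuclearRepN (d : ℕ) (σ₁ : ℝ) (u₁ p₁ q₁ : ℝ≥0∞) (σ₂ : ℝ) (u₂ p₂ q₂ : ℝ≥0∞)
    (T : DSeq d →ₗ[ℂ] DSeq d) (a : ℕ → (DSeq d →ₗ[ℂ] ℂ)) (y : ℕ → DSeq d) : Prop :=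
  (∀ n, nNorm d σ₂ u₂ p₂ q₂ (y n) ≠ ∞) ∧
  Summable (fun n => nDualNorm d σ₁ u₁ p₁ q₁ (a n) * (nNorm d σ₂ u₂ p₂ q₂ (y n)).toReal) ∧
  ∀ lam : DSeq d, nNorm d σ₁ u₁ p₁ q₁ lam ≠ ∞ →
    Filter.Tendsto
      (fun N : ℕ => nNorm d σ₂ u₂ p₂ q₂ (T lam - ∑ n ∈ Finset.range N, a n lam • y n))
      Filter.atTop (nhds 0)

/-- The natural embedding `Id : ñ^{σ₁}_{u₁,p₁,q₁} → ñ^{σ₂}_{u₂,p₂,q₂}` is nuclear: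
every element of the source space lies in the target space and the inclusion admits
a nuclear representation. -/
def NuclearEmbN (d : ℕ) (σ₁ : ℝ) (u₁ p₁ q₁ : ℝ≥0∞) (σ₂ : ℝ) (u₂ p₂ q₂ : ℝ≥0∞) : Prop :=
  (∀ lam : DSeq d, nNorm d σ₁ u₁ p₁ q₁ lam ≠ ∞ → nNorm d σ₂ u₂ p₂ q₂ lam ≠ ∞) ∧
  ∃ a y, IsNuclearRepN d σ₁ u₁ p₁ q₁ σ₂ u₂ p₂ q₂ (LinearMap.id : DSeq d →ₗ[ℂ] DSeq d) a y

/-- The Tong exponent `t(r₁,r₂)`: `1/t = 1` if `r₂ ≤ r₁`, and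
`1/t = 1 - 1/r₁ + 1/r₂` if `r₁ ≤ r₂`. -/
noncomputable def tong (r₁ r₂ : ℝ≥0∞) : ℝ≥0∞ :=
  if r₂ ≤ r₁ then 1 else (1 - r₁⁻¹ + r₂⁻¹)⁻¹

/-- The nuclear norm of a linear operator `T` from `ñ^{σ₁}_{u₁,p₁,q₁}` to
`ñ^{σ₂}_{u₂,p₂,q₂}`: the infimum of `∑_n ‖a n‖' ‖y n‖` over all nuclear
representations of `T`. -/
noncomputable def nucNormOpN (d : ℕ) (σ₁ : ℝ) (u₁ p₁ q₁ : ℝ≥0∞) (σ₂ : ℝ)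
    (u₂ p₂ q₂ : ℝ≥0∞) (T : DSeq d →ₗ[ℂ] DSeq d) : ℝ :=
  sInf {c : ℝ | ∃ a y, IsNuclearRepN d σ₁ u₁ p₁ q₁ σ₂ u₂ p₂ q₂ T a y ∧
    c = ∑' n, nDualNorm d σ₁ u₁ p₁ q₁ (a n) * (nNorm d σ₂ u₂ p₂ q₂ (y n)).toReal}

/-- The level projection `Id_j`: `(Id_j λ)_{i,k} = λ_{j,k}` if `i = j`, else `0`. -/
def levelProj (d j : ℕ) : DSeq d →ₗ[ℂ] DSeq d where
  toFun lam := fun i k => if i = j then lam i k else 0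
  map_add' lam μ := by
    funext i k
    by_cases h : i = j <;> simp [h]
  map_smul' c lam := by
    funext i k
    by_cases h : i = j <;> simp [h]

namespace Stmt14Aux

open scoped NNReal

/-! ### ENNReal powers of two -/

noncomputable def rp (x : ℝ) : ℝ≥0∞ := (2 : ℝ≥0∞) ^ x

lemma rp_ne_top (x : ℝ) : rp x ≠ ∞ := by
  simp [rp, ENNReal.rpow_eq_top_iff]

lemma rp_ne_zero (x : ℝ) : rp x ≠ 0 := by
  simp [rp, ENNReal.rpow_eq_zero_iff]

lemma rp_add (x y : ℝ) : rp (x + y) = rp x * rp y :=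
  ENNReal.rpow_add x y two_ne_zero ENNReal.ofNat_ne_top

lemma rp_neg (x : ℝ) : rp (-x) = (rp x)⁻¹ := ENNReal.rpow_neg 2 x

lemma rp_mono {x y : ℝ} (h : x ≤ y) : rp x ≤ rp y :=
  ENNReal.rpow_le_rpow_of_exponent_le one_le_two h

lemma rp_zero : rp 0 = 1 := ENNReal.rpow_zero

lemma rp_rpow (x s : ℝ) : (rp x) ^ s = rp (x * s) := (ENNReal.rpow_mul 2 x s).symm

lemma rp_toReal (x : ℝ) : (rp x).toReal = (2 : ℝ) ^ x := by
  rw [rp, ← ENNReal.toReal_rpow]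
  norm_num

lemma rp_natCast (n : ℕ) : ((2 ^ n : ℕ) : ℝ≥0∞) = rp n := by
  rw [rp, ENNReal.rpow_natCast]
  push_cast
  rfl

lemma rp_cancel {x : ℝ} {a b : ℝ≥0∞} (h : rp x * a ≤ b) : a ≤ rp (-x) * b := by
  have := mul_le_mul_right h (rp (-x))
  rwa [← mul_assoc, ← rp_add, neg_add_cancel, rp_zero, one_mul] at this

/-! ### complex characters -/

noncomputable def ech (K : ℕ) (z : ℤ) : ℂ :=
  Complex.exp ((2 * Real.pi * z / K : ℝ) * Complex.I)

lemma ech_zero (K : ℕ) : ech K 0 = 1 := by simp [ech]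

lemma ech_add (K : ℕ) (a b : ℤ) : ech K (a + b) = ech K a * ech K b := by
  rw [ech, ech, ech, ← Complex.exp_add]
  congr 1
  push_cast
  ring

lemma ech_norm (K : ℕ) (z : ℤ) : ‖ech K z‖ = 1 := Complex.norm_exp_ofReal_mul_I _

lemma ech_nnnorm (K : ℕ) (z : ℤ) : ‖ech K z‖₊ = 1 := by
  ext
  simpa using ech_norm K z

lemma ech_nat_mul (K : ℕ) (l : ℕ) (z : ℤ) : ech K (l * z) = ech K z ^ l := by
  rw [ech, ech, ← Complex.exp_nat_mul]
  congr 1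
  push_cast
  ring

lemma ech_int_mul_self (K : ℕ) (hK : K ≠ 0) (z : ℤ) : ech K ((K : ℤ) * z) = 1 := by
  have : ((2 * Real.pi * ((K : ℤ) * z) / K : ℝ) : ℂ) * Complex.I = (z : ℤ) * (2 * Real.pi * Complex.I) := by
    have hK' : (K : ℂ) ≠ 0 := Nat.cast_ne_zero.mpr hK
    push_cast
    field_simp
  rw [ech]
  push_cast
  push_cast at this
  rw [this, Complex.exp_int_mul_two_pi_mul_I]

lemma ech_eq_one_iff (K : ℕ) (hK : K ≠ 0) (z : ℤ) : ech K z = 1 ↔ (K : ℤ) ∣ z := by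
  constructor
  · intro h
    rw [ech, Complex.exp_eq_one_iff] at h
    obtain ⟨n, hn⟩ := h
    have hI : ((2 * Real.pi * z / K : ℝ) : ℂ) = ((n * (2 * Real.pi) : ℝ) : ℂ) := by
      have : ((2 * Real.pi * z / K : ℝ) : ℂ) * Complex.I = ((n * (2 * Real.pi) : ℝ) : ℂ) * Complex.I := by
        rw [hn]; push_cast; ring
      exact mul_right_cancel₀ Complex.I_ne_zero this
    have hR : (2 * Real.pi * z / K : ℝ) = (n * (2 * Real.pi) : ℝ) := by
      exact_mod_cast hI
    have hK' : (K : ℝ) ≠ 0 := Nat.cast_ne_zero.mpr hK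
    have hz : (z : ℝ) = (K : ℝ) * n := by
      have hpi := Real.pi_pos
      field_simp at hR
      nlinarith [hR, Real.pi_pos]
    exact ⟨n, by exact_mod_cast hz⟩
  · rintro ⟨w, rfl⟩
    exact ech_int_mul_self K hK w

lemma sum_ech (K : ℕ) (hK : K ≠ 0) (t : ℤ) (ht : t.natAbs < K) :
    ∑ l ∈ Finset.range K, ech K t ^ l = if t = 0 then (K : ℂ) else 0 := by
  rcases eq_or_ne t 0 with rfl | htne
  · simp [ech_zero]
  · rw [if_neg htne]
    have hne : ech K t ≠ 1 := by
      intro h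
      rcases (ech_eq_one_iff K hK t).mp h with ⟨w, hw⟩
      have : (K : ℤ) ∣ t := ⟨w, hw⟩
      have := Int.natAbs_dvd_natAbs.mpr this
      simp only [Int.natAbs_natCast] at this
      have := Nat.le_of_dvd (Nat.pos_of_ne_zero (fun h0 => htne (by simpa [Int.natAbs_eq_zero] using h0))) this
      omega
    rw [geom_sum_eq hne]
    have hKt : ech K t ^ K = 1 := by
      have : ((K : ℕ) : ℤ) * t = (K : ℤ) * t := by push_cast; ring
      rw [← ech_nat_mul, this, ech_int_mul_self K hK]
    rw [hKt]
    simp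


/-! ### combinatorics -/

section Comb

variable (d j mu : ℕ)

def posn (m : Fin d → Fin (2 ^ j)) : Fin d → Fin (2 ^ (j - mu)) :=
  fun i => ⟨(m i : ℕ) % 2 ^ (j - mu), Nat.mod_lt _ (pow_pos (by norm_num) _)⟩

def crsn (m : Fin d → Fin (2 ^ j)) : Fin d → Fin (2 ^ mu) :=
  fun i => ⟨(m i : ℕ) / 2 ^ (j - mu), by
    rw [Nat.div_lt_iff_lt_mul (pow_pos (by norm_num) _), ← pow_add]
    exact lt_of_lt_of_le (m i).isLt (Nat.pow_le_pow_right (by norm_num) (by omega))⟩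

def Kn : ℕ := (2 ^ mu) ^ d

lemma Kn_pos : 0 < Kn d mu := pow_pos (pow_pos (by norm_num) _) _

def idx (c : Fin d → Fin (2 ^ mu)) : ℕ := (finFunctionFinEquiv c : ℕ)

lemma idx_lt (c : Fin d → Fin (2 ^ mu)) : idx d mu c < Kn d mu :=
  (finFunctionFinEquiv c).isLt

lemma idx_inj {c c' : Fin d → Fin (2 ^ mu)} (h : idx d mu c = idx d mu c') : c = c' :=
  finFunctionFinEquiv.injective (Fin.val_injective h)

lemma eq_of_pos_crs {m m' : Fin d → Fin (2 ^ j)}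
    (hp : posn d j mu m = posn d j mu m') (hc : crsn d j mu m = crsn d j mu m') : m = m' := by
  funext i
  have h1 : (m i : ℕ) % 2 ^ (j - mu) = (m' i : ℕ) % 2 ^ (j - mu) := by
    simpa [posn, Fin.ext_iff] using congrFun hp i
  have h2 : (m i : ℕ) / 2 ^ (j - mu) = (m' i : ℕ) / 2 ^ (j - mu) := by
    simpa [crsn, Fin.ext_iff] using congrFun hc i
  refine Fin.ext ?_
  calc (m i : ℕ) = 2 ^ (j - mu) * ((m i : ℕ) / 2 ^ (j - mu)) + (m i : ℕ) % 2 ^ (j - mu) :=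
        (Nat.div_add_mod _ _).symm
    _ = 2 ^ (j - mu) * ((m' i : ℕ) / 2 ^ (j - mu)) + (m' i : ℕ) % 2 ^ (j - mu) := by
        rw [h1, h2]
    _ = (m' i : ℕ) := Nat.div_add_mod _ _

lemma card_pos_fiber_le (r : Fin d → Fin (2 ^ (j - mu))) :
    (Finset.univ.filter fun m : Fin d → Fin (2 ^ j) => posn d j mu m = r).card ≤ Kn d mu := by
  have h : (Finset.univ.filter fun m : Fin d → Fin (2 ^ j) => posn d j mu m = r).card ≤
      (Finset.univ : Finset (Fin d → Fin (2 ^ mu))).card := by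
    apply Finset.card_le_card_of_injOn (fun m => crsn d j mu m) (fun m _ => Finset.mem_univ _)
    intro m hm m' hm' hc
    simp only [Finset.mem_coe, Finset.mem_filter] at hm hm'
    exact eq_of_pos_crs d j mu (hm.2.trans hm'.2.symm) hc
  simpa [Kn, Fintype.card_fun] using h

lemma card_cube_fiber_le (ν : ℕ) (hν : ν ≤ j) (hmu : mu ≤ j) (k : Fin d → ℕ)
    (r : Fin d → Fin (2 ^ (j - mu))) :
    (Finset.univ.filter fun m : Fin d → Fin (2 ^ j) =>
      cubeLE ν m k ∧ posn d j mu m = r).card ≤ 2 ^ (d * (mu - ν)) := by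
  have h : (Finset.univ.filter fun m : Fin d → Fin (2 ^ j) =>
      cubeLE ν m k ∧ posn d j mu m = r).card ≤
      (Finset.univ : Finset (Fin d → Fin (2 ^ (mu - ν)))).card := by
    apply Finset.card_le_card_of_injOn
      (fun m (i : Fin d) => (⟨((m i : ℕ) / 2 ^ (j - mu)) % 2 ^ (mu - ν),
        Nat.mod_lt _ (pow_pos (by norm_num) _)⟩ : Fin (2 ^ (mu - ν))))
      (fun m _ => Finset.mem_univ _)
    intro m hm m' hm' he
    · simp only [Finset.mem_coe, Finset.mem_filter] at hm hm'
      funext i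
      have h1 : (m i : ℕ) % 2 ^ (j - mu) = (m' i : ℕ) % 2 ^ (j - mu) := by
        simpa [posn, Fin.ext_iff] using congrFun (hm.2.2.trans hm'.2.2.symm) i
      have h4 : ((m i : ℕ) / 2 ^ (j - mu)) % 2 ^ (mu - ν)
          = ((m' i : ℕ) / 2 ^ (j - mu)) % 2 ^ (mu - ν) := by
        simpa [Fin.ext_iff] using congrFun he i
      have hc1 : (m i : ℕ) / 2 ^ (j - ν) = k i := hm.2.1 i
      have hc2 : (m' i : ℕ) / 2 ^ (j - ν) = k i := hm'.2.1 i
      rcases le_or_gt ν mu with hcase | hcase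
      · have key : ∀ a : ℕ, a / 2 ^ (j - ν) = (a / 2 ^ (j - mu)) / 2 ^ (mu - ν) := by
          intro a
          rw [Nat.div_div_eq_div_mul, ← pow_add]
          congr 2
          omega
        rw [key] at hc1 hc2
        have hq : (m i : ℕ) / 2 ^ (j - mu) = (m' i : ℕ) / 2 ^ (j - mu) := by
          calc (m i : ℕ) / 2 ^ (j - mu)
              = 2 ^ (mu - ν) * ((m i : ℕ) / 2 ^ (j - mu) / 2 ^ (mu - ν))
                + ((m i : ℕ) / 2 ^ (j - mu)) % 2 ^ (mu - ν) := (Nat.div_add_mod _ _).symm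
            _ = 2 ^ (mu - ν) * ((m' i : ℕ) / 2 ^ (j - mu) / 2 ^ (mu - ν))
                + ((m' i : ℕ) / 2 ^ (j - mu)) % 2 ^ (mu - ν) := by rw [hc1, hc2, h4]
            _ = (m' i : ℕ) / 2 ^ (j - mu) := Nat.div_add_mod _ _
        refine Fin.ext ?_
        calc (m i : ℕ)
            = 2 ^ (j - mu) * ((m i : ℕ) / 2 ^ (j - mu)) + (m i : ℕ) % 2 ^ (j - mu) :=
              (Nat.div_add_mod _ _).symm
          _ = 2 ^ (j - mu) * ((m' i : ℕ) / 2 ^ (j - mu)) + (m' i : ℕ) % 2 ^ (j - mu) := by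
              rw [h1, hq]
          _ = (m' i : ℕ) := Nat.div_add_mod _ _
      · have hdvd : (2 : ℕ) ^ (j - ν) ∣ 2 ^ (j - mu) := pow_dvd_pow 2 (by omega)
        have k1 : (m i : ℕ) % 2 ^ (j - ν) = ((m i : ℕ) % 2 ^ (j - mu)) % 2 ^ (j - ν) :=
          (Nat.mod_mod_of_dvd _ hdvd).symm
        have k2 : (m' i : ℕ) % 2 ^ (j - ν) = ((m' i : ℕ) % 2 ^ (j - mu)) % 2 ^ (j - ν) :=
          (Nat.mod_mod_of_dvd _ hdvd).symm
        have hmods : (m i : ℕ) % 2 ^ (j - ν) = (m' i : ℕ) % 2 ^ (j - ν) := by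
          rw [k1, k2, h1]
        refine Fin.ext ?_
        calc (m i : ℕ)
            = 2 ^ (j - ν) * ((m i : ℕ) / 2 ^ (j - ν)) + (m i : ℕ) % 2 ^ (j - ν) :=
              (Nat.div_add_mod _ _).symm
          _ = 2 ^ (j - ν) * ((m' i : ℕ) / 2 ^ (j - ν)) + (m' i : ℕ) % 2 ^ (j - ν) := by
              rw [hmods, hc1, hc2]
          _ = (m' i : ℕ) := Nat.div_add_mod _ _
  calc _ ≤ Fintype.card (Fin d → Fin (2 ^ (mu - ν))) := by simpa using h
    _ = 2 ^ (d * (mu - ν)) := by simp [Fintype.card_fun, ← pow_mul, mul_comm]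

end Comb


/-! ### the representation -/

section Rep

variable (d j mu : ℕ)

noncomputable def psi (r : Fin d → Fin (2 ^ (j - mu))) (l : ℕ) :
    (Fin d → Fin (2 ^ j)) → ℂ :=
  fun m => if posn d j mu m = r then ech (Kn d mu) (l * idx d mu (crsn d j mu m)) else 0

noncomputable def Afun (r : Fin d → Fin (2 ^ (j - mu))) (l : ℕ) : DSeq d →ₗ[ℂ] ℂ where
  toFun lam := (Kn d mu : ℂ)⁻¹ * ∑ m : Fin d → Fin (2 ^ j),
    (if posn d j mu m = r then ech (Kn d mu) (-(l * idx d mu (crsn d j mu m))) else 0) * lam j m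
  map_add' lam lam' := by
    simp only [Pi.add_apply, mul_add, Finset.sum_add_distrib]
  map_smul' c lam := by
    simp only [Pi.smul_apply, smul_eq_mul, RingHom.id_apply, Finset.mul_sum, Finset.sum_mul]
    apply Finset.sum_congr rfl
    intro m _
    ring

noncomputable def Yseq (r : Fin d → Fin (2 ^ (j - mu))) (l : ℕ) : DSeq d :=
  fun i k => if h : i = j then psi d j mu r l (fun t => Fin.cast (by rw [h]) (k t)) else 0

lemma Yseq_apply_ne (r : Fin d → Fin (2 ^ (j - mu))) (l : ℕ) {i : ℕ} (h : i ≠ j) :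
    Yseq d j mu r l i = 0 := by
  funext k
  simp [Yseq, h]

lemma Yseq_apply_self (r : Fin d → Fin (2 ^ (j - mu))) (l : ℕ) :
    Yseq d j mu r l j = psi d j mu r l := by
  funext k
  simp [Yseq]

lemma recon (lam : DSeq d) (m : Fin d → Fin (2 ^ j)) :
    ∑ r : Fin d → Fin (2 ^ (j - mu)), ∑ l : Fin (Kn d mu),
      Afun d j mu r (l : ℕ) lam * psi d j mu r (l : ℕ) m = lam j m := by
  have hKpos := Kn_pos d mu
  have hK0 : (Kn d mu : ℂ) ≠ 0 := Nat.cast_ne_zero.mpr hKpos.ne'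
  set K := Kn d mu with hK
  set c : ℕ := idx d mu (crsn d j mu m) with hc
  have hclt : c < K := idx_lt d mu _
  rw [Finset.sum_eq_single (posn d j mu m)]
  · -- main term
    have hpsi : ∀ l : ℕ, psi d j mu (posn d j mu m) l m = ech K (l * c) := by
      intro l
      rw [psi, if_pos rfl]
    simp only [Afun, LinearMap.coe_mk, AddHom.coe_mk, hpsi]
    have step1 : ∀ l : ℕ,
        ((K : ℂ)⁻¹ * ∑ m' : Fin d → Fin (2 ^ j),
          (if posn d j mu m' = posn d j mu m
            then ech K (-(l * idx d mu (crsn d j mu m'))) else 0) * lam j m') * ech K (l * c)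
        = (K : ℂ)⁻¹ * ∑ m' : Fin d → Fin (2 ^ j),
            (if posn d j mu m' = posn d j mu m
              then ech K (-(l * idx d mu (crsn d j mu m'))) else 0) * lam j m' * ech K (l * c) := by
      intro l
      rw [mul_assoc, Finset.sum_mul]
    simp only [← hK, step1]
    rw [← Finset.mul_sum, Finset.sum_comm]
    have main : ∀ m' : Fin d → Fin (2 ^ j),
        ∑ l : Fin K,
          (if posn d j mu m' = posn d j mu m
            then ech K (-((l : ℕ) * idx d mu (crsn d j mu m'))) else 0) * lam j m'
            * ech K ((l : ℕ) * c)
        = if m' = m then (K : ℂ) * lam j m else 0 := by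
      intro m'
      set c' : ℕ := idx d mu (crsn d j mu m') with hc'
      have hclt' : c' < K := idx_lt d mu _
      by_cases hp' : posn d j mu m' = posn d j mu m
      · have hech : ∀ l : ℕ, ech K (-(l * c')) * ech K (l * c) = ech K ((c : ℤ) - c') ^ l := by
          intro l
          rw [← ech_add, ← ech_nat_mul]
          congr 1
          push_cast
          ring
        have sum_form : ∑ l : Fin K,
            (if posn d j mu m' = posn d j mu m then ech K (-((l : ℕ) * c')) else 0) * lam j m'
              * ech K ((l : ℕ) * c)
            = (∑ l ∈ Finset.range K, ech K ((c : ℤ) - c') ^ l) * lam j m' := by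
          rw [Finset.sum_mul, ← Fin.sum_univ_eq_sum_range]
          apply Finset.sum_congr rfl
          intro l _
          rw [if_pos hp', mul_right_comm, hech]
        rw [sum_form, sum_ech K hKpos.ne' _ (by omega)]
        by_cases hm' : m' = m
        · subst hm'
          simp [hc, hc']
        · have hcc : (c : ℤ) - c' ≠ 0 := by
            intro h0
            apply hm'
            have : c' = c := by omega
            exact eq_of_pos_crs d j mu hp' (idx_inj d mu (hc'.symm ▸ hc.symm ▸ this))
          rw [if_neg hcc, if_neg hm', zero_mul]
      · have hm' : m' ≠ m := fun h => hp' (by rw [h])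
        rw [if_neg hm']
        apply Finset.sum_eq_zero
        intro l _
        rw [if_neg hp', zero_mul, zero_mul]
    simp only [main]
    rw [Finset.sum_ite_eq' Finset.univ m (fun _ => (K : ℂ) * lam j m)]
    rw [if_pos (Finset.mem_univ m), ← mul_assoc, inv_mul_cancel₀ hK0, one_mul]
  · intro r _ hr
    apply Finset.sum_eq_zero
    intro l _
    rw [psi, if_neg (fun h => hr h.symm), mul_zero]
  · intro h
    exact absurd (Finset.mem_univ _) h

end Rep


/-! ### norm estimates -/

section Norms

variable (d j mu : ℕ)

lemma levelNorm_zero (u p : ℝ≥0∞) (hp0 : p ≠ ∞ → 0 < p.toReal) :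
    levelNorm d j u p (fun _ => 0) = 0 := by
  refine le_antisymm ?_ (zero_le)
  simp only [levelNorm]
  refine iSup_le fun ν => iSup_le fun k => ?_
  by_cases hp : p = ∞
  · simp [hp]
  · rw [if_neg hp]
    have h1 : ∀ m : Fin d → Fin (2 ^ j),
        (if cubeLE (ν : ℕ) m (fun i => (k i : ℕ)) then (‖(0:ℂ)‖₊ : ℝ≥0∞) ^ p.toReal else 0) = 0 := by
      intro m
      split_ifs with h
      · simp [ENNReal.zero_rpow_of_pos (hp0 hp)]
      · rfl
    rw [Finset.sum_congr rfl (fun m _ => h1 m), Finset.sum_const, smul_zero,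
      ENNReal.zero_rpow_of_pos (one_div_pos.mpr (hp0 hp)), mul_zero]

lemma le_nNorm (σ : ℝ) (u p q : ℝ≥0∞) (hq1 : 1 ≤ q) (lam : DSeq d) :
    (2 : ℝ≥0∞) ^ ((j : ℝ) * (σ - d * (u⁻¹).toReal)) * levelNorm d j u p (lam j)
      ≤ nNorm d σ u p q lam := by
  rw [nNorm]
  split_ifs with hq
  · exact le_iSup (fun i : ℕ => (2 : ℝ≥0∞) ^ ((i : ℝ) * (σ - d * (u⁻¹).toReal))
      * levelNorm d i u p (lam i)) j
  · have hq0 : 0 < q.toReal := ENNReal.toReal_pos (by intro h; rw [h] at hq1; simp at hq1) hq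
    set X := (2 : ℝ≥0∞) ^ ((j : ℝ) * (σ - d * (u⁻¹).toReal)) * levelNorm d j u p (lam j)
    calc X = (X ^ q.toReal) ^ (1 / q.toReal) := by
          rw [← ENNReal.rpow_mul, mul_one_div_cancel hq0.ne', ENNReal.rpow_one]
      _ ≤ _ := ENNReal.rpow_le_rpow (ENNReal.le_tsum j) (one_div_nonneg.mpr hq0.le)

lemma nNorm_single (σ : ℝ) (u p q : ℝ≥0∞) (hq1 : 1 ≤ q) (hp0 : p ≠ ∞ → 0 < p.toReal)
    (lam : DSeq d) (hlam : ∀ i, i ≠ j → lam i = 0) :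
    nNorm d σ u p q lam
      = (2 : ℝ≥0∞) ^ ((j : ℝ) * (σ - d * (u⁻¹).toReal)) * levelNorm d j u p (lam j) := by
  have hzero : ∀ i : ℕ, i ≠ j →
      (2 : ℝ≥0∞) ^ ((i : ℝ) * (σ - d * (u⁻¹).toReal)) * levelNorm d i u p (lam i) = 0 := by
    intro i hi
    have : lam i = (fun _ => 0) := hlam i hi
    rw [this, levelNorm_zero d i u p hp0, mul_zero]
  rw [nNorm]
  split_ifs with hq
  · refine le_antisymm (iSup_le fun i => ?_) (le_iSup (fun i : ℕ => (2 : ℝ≥0∞) ^ ((i : ℝ)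
      * (σ - d * (u⁻¹).toReal)) * levelNorm d i u p (lam i)) j)
    by_cases hi : i = j
    · subst hi; exact le_rfl
    · rw [hzero i hi]; exact zero_le
  · have hq0 : 0 < q.toReal := ENNReal.toReal_pos (by intro h; rw [h] at hq1; simp at hq1) hq
    rw [tsum_eq_single j (fun i hi => by rw [hzero i hi, ENNReal.zero_rpow_of_pos hq0])]
    rw [← ENNReal.rpow_mul, mul_one_div_cancel hq0.ne', ENNReal.rpow_one]

lemma nNorm_zero_fun (σ : ℝ) (u p q : ℝ≥0∞) (hq1 : 1 ≤ q) (hp0 : p ≠ ∞ → 0 < p.toReal) :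
    nNorm d σ u p q (fun _ _ => 0) = 0 := by
  have h := nNorm_single d 0 σ u p q hq1 hp0 (fun _ _ => 0) (fun i _ => rfl)
  rw [h, levelNorm_zero d 0 u p hp0, mul_zero]

lemma coord_le_levelNorm (u p : ℝ≥0∞) (hp1 : 1 ≤ p)
    (f : (Fin d → Fin (2 ^ j)) → ℂ) (m : Fin d → Fin (2 ^ j)) :
    (‖f m‖₊ : ℝ≥0∞) ≤ levelNorm d j u p f := by
  rw [levelNorm]
  refine le_iSup_of_le ⟨j, Nat.lt_succ_self j⟩ ?_
  refine le_iSup_of_le (fun i => m i) ?_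
  have hpre : (((d * (j - ((⟨j, Nat.lt_succ_self j⟩ : Fin (j+1)) : ℕ)) : ℕ) : ℝ)
      * ((u⁻¹).toReal - (p⁻¹).toReal)) = 0 := by
    simp [Nat.sub_self]
  rw [hpre, ENNReal.rpow_zero, one_mul]
  have hcube : cubeLE (((⟨j, Nat.lt_succ_self j⟩ : Fin (j+1)) : ℕ)) m
      (fun i => ((m i : Fin (2 ^ j)) : ℕ)) := by
    intro i
    simp [Nat.sub_self]
  by_cases hp : p = ∞
  · rw [if_pos hp]
    exact le_iSup_of_le ⟨m, hcube⟩ le_rfl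
  · rw [if_neg hp]
    have hp0 : 0 < p.toReal := ENNReal.toReal_pos (by intro h; rw [h] at hp1; simp at hp1) hp
    have h1 : (‖f m‖₊ : ℝ≥0∞) ^ p.toReal
        ≤ ∑ m' : Fin d → Fin (2 ^ j),
          if cubeLE (((⟨j, Nat.lt_succ_self j⟩ : Fin (j+1)) : ℕ)) m'
            (fun i => ((m i : Fin (2 ^ j)) : ℕ)) then (‖f m'‖₊ : ℝ≥0∞) ^ p.toReal else 0 := by
      have := Finset.single_le_sum (f := fun m' : Fin d → Fin (2 ^ j) =>
        if cubeLE (((⟨j, Nat.lt_succ_self j⟩ : Fin (j+1)) : ℕ)) m'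
          (fun i => ((m i : Fin (2 ^ j)) : ℕ)) then (‖f m'‖₊ : ℝ≥0∞) ^ p.toReal else 0)
        (fun _ _ => zero_le) (Finset.mem_univ m)
      simpa [hcube] using this
    calc (‖f m‖₊ : ℝ≥0∞) = ((‖f m‖₊ : ℝ≥0∞) ^ p.toReal) ^ (1 / p.toReal) := by
          rw [← ENNReal.rpow_mul, mul_one_div_cancel hp0.ne', ENNReal.rpow_one]
      _ ≤ _ := ENNReal.rpow_le_rpow h1 (by positivity)

lemma l0_le_levelNorm (u p : ℝ≥0∞) (hp : p ≠ ∞)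
    (f : (Fin d → Fin (2 ^ j)) → ℂ) :
    (2 : ℝ≥0∞) ^ (((d * j : ℕ) : ℝ) * ((u⁻¹).toReal - (p⁻¹).toReal))
      * (∑ m : Fin d → Fin (2 ^ j), (‖f m‖₊ : ℝ≥0∞) ^ p.toReal) ^ (1 / p.toReal)
      ≤ levelNorm d j u p f := by
  rw [levelNorm]
  refine le_iSup_of_le ⟨0, Nat.succ_pos j⟩ ?_
  refine le_iSup_of_le (fun _ => ⟨0, pow_pos (by norm_num) _⟩) ?_
  rw [if_neg hp]
  have hcube : ∀ m' : Fin d → Fin (2 ^ j), cubeLE 0 m' (fun _ => (0 : ℕ)) := by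
    intro m' i
    exact Nat.div_eq_of_lt (by simpa using (m' i).isLt)
  refine le_of_eq ?_
  congr 1
  congr 1
  apply Finset.sum_congr rfl
  intro m' _
  rw [if_pos (hcube m')]

end Norms


/-! ### estimates for the representation -/

section RepEst

variable (d j mu : ℕ)

lemma nnnorm_psi (r : Fin d → Fin (2 ^ (j - mu))) (l : ℕ) (m : Fin d → Fin (2 ^ j)) :
    (‖psi d j mu r l m‖₊ : ℝ≥0∞) = if posn d j mu m = r then 1 else 0 := by
  rw [psi]
  split_ifs with h
  · rw [ech_nnnorm]; rfl
  · simp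

lemma levelNorm_psi_le (u p : ℝ≥0∞) (hp1 : 1 ≤ p) (hpu : p ≤ u) (hpinf : p = ∞ → u = ∞)
    (hmu : mu ≤ j) (r : Fin d → Fin (2 ^ (j - mu))) (l : ℕ) :
    levelNorm d j u p (psi d j mu r l)
      ≤ rp (max ((d : ℝ) * j * ((u⁻¹).toReal - (p⁻¹).toReal)
          + (d : ℝ) * mu * (p⁻¹).toReal) 0) := by
  have hp0ne : p ≠ 0 := fun h => by rw [h] at hp1; simp at hp1
  have hbu_le_bp : (u⁻¹).toReal ≤ (p⁻¹).toReal := by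
    refine ENNReal.toReal_mono (ENNReal.inv_ne_top.mpr hp0ne) (ENNReal.inv_le_inv.mpr hpu)
  have hbp0 : 0 ≤ (p⁻¹).toReal := ENNReal.toReal_nonneg
  have hbu0 : 0 ≤ (u⁻¹).toReal := ENNReal.toReal_nonneg
  rw [levelNorm]
  refine iSup_le fun ν => iSup_le fun k => ?_
  have hν : (ν : ℕ) ≤ j := Nat.lt_succ_iff.mp ν.isLt
  by_cases hp : p = ∞
  · have hu : u = ∞ := hpinf hp
    have hz : (((d * (j - (ν : ℕ)) : ℕ) : ℝ) * ((u⁻¹).toReal - (p⁻¹).toReal)) = 0 := by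
      rw [hp, hu]; simp
    rw [hz, ENNReal.rpow_zero, one_mul, if_pos hp]
    refine le_trans (iSup_le fun m => ?_) (rp_mono (le_max_right _ _))
    · rw [rp_zero]
      have := nnnorm_psi d j mu r l (m : Fin d → Fin (2 ^ j))
      rw [this]
      split_ifs <;> simp
  · have hpt : 0 < p.toReal := ENNReal.toReal_pos hp0ne hp
    have hbp : (p⁻¹).toReal = 1 / p.toReal := by
      rw [ENNReal.toReal_inv, one_div]
    rw [if_neg hp]
    have hsum : (∑ m : Fin d → Fin (2 ^ j),
        if cubeLE (ν : ℕ) m (fun i => (k i : ℕ))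
          then (‖psi d j mu r l m‖₊ : ℝ≥0∞) ^ p.toReal else 0)
        = ((Finset.univ.filter fun m : Fin d → Fin (2 ^ j) =>
            cubeLE (ν : ℕ) m (fun i => (k i : ℕ)) ∧ posn d j mu m = r).card : ℝ≥0∞) := by
      rw [← Finset.sum_boole]
      apply Finset.sum_congr rfl
      intro m _
      rw [nnnorm_psi]
      by_cases h1 : cubeLE (ν : ℕ) m (fun i => (k i : ℕ)) <;>
        by_cases h2 : posn d j mu m = r <;>
        simp [h1, h2, ENNReal.zero_rpow_of_pos hpt]
    rw [hsum]
    have hcard := card_cube_fiber_le d j mu (ν : ℕ) hν hmu (fun i => (k i : ℕ)) r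
    have h2 : (((Finset.univ.filter fun m : Fin d → Fin (2 ^ j) =>
        cubeLE (ν : ℕ) m (fun i => (k i : ℕ)) ∧ posn d j mu m = r).card : ℝ≥0∞)) ^ (1 / p.toReal)
        ≤ rp ((d * (mu - (ν : ℕ)) : ℕ)) ^ (1 / p.toReal) := by
      refine ENNReal.rpow_le_rpow ?_ (by positivity)
      rw [← rp_natCast]
      exact_mod_cast Nat.cast_le.mpr hcard
    refine le_trans (mul_le_mul_right h2 _) ?_
    rw [rp_rpow]
    have hpre : (2 : ℝ≥0∞) ^ (((d * (j - (ν : ℕ)) : ℕ) : ℝ) * ((u⁻¹).toReal - (p⁻¹).toReal))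
        = rp (((d * (j - (ν : ℕ)) : ℕ) : ℝ) * ((u⁻¹).toReal - (p⁻¹).toReal)) := rfl
    rw [hpre, ← rp_add]
    apply rp_mono
    rw [← hbp]
    have hc1 : ((d * (j - (ν : ℕ)) : ℕ) : ℝ) = (d : ℝ) * ((j : ℝ) - (ν : ℕ)) := by
      push_cast [Nat.cast_sub hν]
      ring
    rcases le_or_gt (ν : ℕ) mu with hcase | hcase
    · have hc2 : ((d * (mu - (ν : ℕ)) : ℕ) : ℝ) = (d : ℝ) * ((mu : ℝ) - (ν : ℕ)) := by
        push_cast [Nat.cast_sub hcase]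
        ring
      rw [hc1, hc2]
      refine le_trans ?_ (le_max_left _ _)
      nlinarith [Nat.cast_nonneg (α := ℝ) (ν : ℕ), Nat.cast_nonneg (α := ℝ) d,
        mul_nonneg (mul_nonneg (Nat.cast_nonneg (α := ℝ) (ν : ℕ)) (Nat.cast_nonneg (α := ℝ) d)) hbu0]
    · have hc2 : ((d * (mu - (ν : ℕ)) : ℕ) : ℝ) = 0 := by
        rw [Nat.sub_eq_zero_of_le hcase.le]
        simp
      rw [hc1, hc2]
      refine le_trans ?_ (le_max_right _ _)
      have hjν : (0 : ℝ) ≤ (j : ℝ) - (ν : ℕ) := by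
        rw [sub_nonneg]; exact_mod_cast hν
      nlinarith [mul_nonneg (mul_nonneg (Nat.cast_nonneg (α := ℝ) d) hjν)
        (sub_nonneg.mpr hbu_le_bp)]

lemma nnnorm_Afun_le (r : Fin d → Fin (2 ^ (j - mu))) (l : ℕ) (lam : DSeq d) :
    (‖Afun d j mu r l lam‖₊ : ℝ≥0∞) ≤ (Kn d mu : ℝ≥0∞)⁻¹
      * ∑ m ∈ Finset.univ.filter (fun m : Fin d → Fin (2 ^ j) => posn d j mu m = r),
          (‖lam j m‖₊ : ℝ≥0∞) := by
  have hKne : (Kn d mu : ℕ) ≠ 0 := (Kn_pos d mu).ne'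
  have happ : Afun d j mu r l lam = (Kn d mu : ℂ)⁻¹ * ∑ m : Fin d → Fin (2 ^ j),
      (if posn d j mu m = r then ech (Kn d mu) (-(l * idx d mu (crsn d j mu m))) else 0)
        * lam j m := rfl
  rw [happ, nnnorm_mul, ENNReal.coe_mul]
  have hnn : ‖((Kn d mu : ℂ))‖₊ = ((Kn d mu : ℝ≥0)) := by
    apply NNReal.coe_injective
    simp
  have h1 : (‖((Kn d mu : ℂ))⁻¹‖₊ : ℝ≥0∞) = (Kn d mu : ℝ≥0∞)⁻¹ := by
    rw [nnnorm_inv, hnn, ENNReal.coe_inv (by exact_mod_cast hKne)]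
    norm_cast
  rw [h1]
  refine mul_le_mul_right ?_ _
  calc (‖∑ m : Fin d → Fin (2 ^ j),
      (if posn d j mu m = r then ech (Kn d mu) (-(l * idx d mu (crsn d j mu m))) else 0)
        * lam j m‖₊ : ℝ≥0∞)
      ≤ ((∑ m : Fin d → Fin (2 ^ j),
        ‖(if posn d j mu m = r then ech (Kn d mu) (-(l * idx d mu (crsn d j mu m))) else 0)
          * lam j m‖₊ : ℝ≥0) : ℝ≥0∞) := ENNReal.coe_le_coe.mpr (nnnorm_sum_le _ _)
    _ = ∑ m : Fin d → Fin (2 ^ j),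
        (‖(if posn d j mu m = r then ech (Kn d mu) (-(l * idx d mu (crsn d j mu m))) else 0)
          * lam j m‖₊ : ℝ≥0∞) := ENNReal.coe_finset_sum _ _
    _ = ∑ m : Fin d → Fin (2 ^ j),
        (if posn d j mu m = r then (‖lam j m‖₊ : ℝ≥0∞) else 0) := by
        apply Finset.sum_congr rfl
        intro m _
        split_ifs with h
        · rw [nnnorm_mul, ech_nnnorm, one_mul]
        · simp
    _ = ∑ m ∈ Finset.univ.filter (fun m : Fin d → Fin (2 ^ j) => posn d j mu m = r),
          (‖lam j m‖₊ : ℝ≥0∞) := by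
        rw [Finset.sum_ite, Finset.sum_const_zero, add_zero]

lemma Afun_le_crude (u p : ℝ≥0∞) (hp1 : 1 ≤ p)
    (r : Fin d → Fin (2 ^ (j - mu))) (l : ℕ) (lam : DSeq d) :
    (‖Afun d j mu r l lam‖₊ : ℝ≥0∞) ≤ levelNorm d j u p (lam j) := by
  have hKne : (Kn d mu : ℕ) ≠ 0 := (Kn_pos d mu).ne'
  refine le_trans (nnnorm_Afun_le d j mu r l lam) ?_
  have h1 : ∑ m ∈ Finset.univ.filter (fun m : Fin d → Fin (2 ^ j) => posn d j mu m = r),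
      (‖lam j m‖₊ : ℝ≥0∞) ≤ (Kn d mu : ℝ≥0∞) * levelNorm d j u p (lam j) := by
    calc ∑ m ∈ Finset.univ.filter (fun m : Fin d → Fin (2 ^ j) => posn d j mu m = r),
        (‖lam j m‖₊ : ℝ≥0∞)
        ≤ ∑ _m ∈ Finset.univ.filter (fun m : Fin d → Fin (2 ^ j) => posn d j mu m = r),
          levelNorm d j u p (lam j) :=
          Finset.sum_le_sum (fun m _ => coord_le_levelNorm d j u p hp1 (lam j) m)
      _ = ((Finset.univ.filter (fun m : Fin d → Fin (2 ^ j) => posn d j mu m = r)).card : ℝ≥0∞)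
          * levelNorm d j u p (lam j) := by rw [Finset.sum_const, nsmul_eq_mul]
      _ ≤ (Kn d mu : ℝ≥0∞) * levelNorm d j u p (lam j) := by
          refine mul_le_mul_left ?_ _
          exact_mod_cast Nat.cast_le.mpr (card_pos_fiber_le d j mu r)
  refine le_trans (mul_le_mul_right h1 _) ?_
  rw [← mul_assoc, ENNReal.inv_mul_cancel (by simpa using hKne) (ENNReal.natCast_ne_top _),
    one_mul]

lemma Kn_eq_rp : (Kn d mu : ℝ≥0∞) = rp ((mu * d : ℕ)) := by
  rw [← rp_natCast, Kn, ← pow_mul]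

lemma Afun_le_holder (u p : ℝ≥0∞) (hp1 : 1 ≤ p) (hp : p ≠ ∞)
    (r : Fin d → Fin (2 ^ (j - mu))) (l : ℕ) (lam : DSeq d) :
    (‖Afun d j mu r l lam‖₊ : ℝ≥0∞)
      ≤ rp (-(((mu * d : ℕ) : ℝ) * (p⁻¹).toReal)
          + ((d * j : ℕ) : ℝ) * ((p⁻¹).toReal - (u⁻¹).toReal)) * levelNorm d j u p (lam j) := by
  have hp0ne : p ≠ 0 := fun h => by rw [h] at hp1; simp at hp1
  have hpt : 0 < p.toReal := ENNReal.toReal_pos hp0ne hp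
  have hpt1 : 1 ≤ p.toReal := by
    have := ENNReal.toReal_mono hp hp1
    simpa using this
  have hbp : (p⁻¹).toReal = p.toReal⁻¹ := ENNReal.toReal_inv p
  have hinv1 : p.toReal⁻¹ ≤ 1 := inv_le_one_of_one_le₀ hpt1
  set s := Finset.univ.filter (fun m : Fin d → Fin (2 ^ j) => posn d j mu m = r) with hs
  set f : (Fin d → Fin (2 ^ j)) → ℝ≥0∞ := fun m => (‖lam j m‖₊ : ℝ≥0∞) with hf
  refine le_trans (nnnorm_Afun_le d j mu r l lam) ?_
  have holder : ∑ m ∈ s, f m ≤ (s.card : ℝ≥0∞) ^ (1 - p.toReal⁻¹)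
      * (∑ m ∈ s, f m ^ p.toReal) ^ p.toReal⁻¹ := by
    have := ENNReal.inner_le_weight_mul_Lp_of_nonneg s hpt1 (fun _ => 1) f
    simpa using this
  have hsum_le : (∑ m ∈ s, f m ^ p.toReal) ^ p.toReal⁻¹
      ≤ (∑ m : Fin d → Fin (2 ^ j), f m ^ p.toReal) ^ p.toReal⁻¹ :=
    ENNReal.rpow_le_rpow (Finset.sum_le_sum_of_subset (Finset.filter_subset _ _))
      (by positivity)
  have hlp : (∑ m : Fin d → Fin (2 ^ j), f m ^ p.toReal) ^ p.toReal⁻¹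
      ≤ rp (((d * j : ℕ) : ℝ) * ((p⁻¹).toReal - (u⁻¹).toReal)) * levelNorm d j u p (lam j) := by
    have h0' : rp (((d * j : ℕ) : ℝ) * ((u⁻¹).toReal - (p⁻¹).toReal))
        * (∑ m : Fin d → Fin (2 ^ j), f m ^ p.toReal) ^ (1 / p.toReal)
        ≤ levelNorm d j u p (lam j) := l0_le_levelNorm d j u p hp (lam j)
    have h0'' := rp_cancel h0'
    rw [one_div] at h0''
    refine le_trans h0'' ?_
    apply mul_le_mul_left
    apply rp_mono
    ring_nf
    exact le_rfl
  have hcard : (s.card : ℝ≥0∞) ^ (1 - p.toReal⁻¹) ≤ (Kn d mu : ℝ≥0∞) ^ (1 - p.toReal⁻¹) := by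
    refine ENNReal.rpow_le_rpow ?_ (by linarith)
    exact_mod_cast Nat.cast_le.mpr (card_pos_fiber_le d j mu r)
  have hKpow : (Kn d mu : ℝ≥0∞) ^ (1 - p.toReal⁻¹) = rp (((mu * d : ℕ) : ℝ) * (1 - p.toReal⁻¹)) := by
    rw [Kn_eq_rp, rp_rpow]
  calc (Kn d mu : ℝ≥0∞)⁻¹ * ∑ m ∈ s, f m
      ≤ (Kn d mu : ℝ≥0∞)⁻¹ * ((Kn d mu : ℝ≥0∞) ^ (1 - p.toReal⁻¹)
        * ((∑ m : Fin d → Fin (2 ^ j), f m ^ p.toReal) ^ p.toReal⁻¹)) :=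
        mul_le_mul_right (le_trans holder (mul_le_mul' hcard hsum_le)) _
    _ ≤ (Kn d mu : ℝ≥0∞)⁻¹ * ((Kn d mu : ℝ≥0∞) ^ (1 - p.toReal⁻¹)
        * (rp (((d * j : ℕ) : ℝ) * ((p⁻¹).toReal - (u⁻¹).toReal))
          * levelNorm d j u p (lam j))) :=
        mul_le_mul_right (mul_le_mul_right hlp _) _
    _ = _ := by
        rw [Kn_eq_rp, ← rp_neg, rp_rpow, ← mul_assoc, ← mul_assoc, ← rp_add, ← rp_add]
        congr 2
        rw [hbp]
        ring

end RepEst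


/-! ### dual norm and the master bound -/

section Master

variable (d j mu : ℕ)

lemma nDualNorm_nonneg (σ : ℝ) (u p q : ℝ≥0∞) (F : DSeq d →ₗ[ℂ] ℂ) :
    0 ≤ nDualNorm d σ u p q F :=
  Real.sInf_nonneg (fun _ hx => hx.1)

lemma nDualNorm_le (σ : ℝ) (u p q : ℝ≥0∞) (F : DSeq d →ₗ[ℂ] ℂ) (c : ℝ)
    (h : ∀ lam : DSeq d, nNorm d σ u p q lam ≠ ∞ →
      (‖F lam‖₊ : ℝ≥0∞) ≤ rp c * nNorm d σ u p q lam) :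
    nDualNorm d σ u p q F ≤ (2 : ℝ) ^ c := by
  refine csInf_le ⟨0, fun x hx => hx.1⟩ ?_
  refine ⟨(Real.rpow_pos_of_pos two_pos c).le, fun lam hlam => ?_⟩
  have h1 := h lam hlam
  have h2 : ((‖F lam‖₊ : ℝ≥0∞)).toReal ≤ (rp c * nNorm d σ u p q lam).toReal :=
    ENNReal.toReal_mono (ENNReal.mul_ne_top (rp_ne_top c) hlam) h1
  rw [ENNReal.toReal_mul, rp_toReal] at h2
  simpa [coe_nnnorm] using h2

lemma card_S (hmu : mu ≤ j) :
    Fintype.card ((Fin d → Fin (2 ^ (j - mu))) × Fin (Kn d mu)) = 2 ^ (j * d) := by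
  rw [Fintype.card_prod, Fintype.card_fun, Fintype.card_fin, Fintype.card_fin,
    Fintype.card_fin, Kn, ← mul_pow, ← pow_add, Nat.sub_add_cancel hmu, ← pow_mul]

lemma master (σ₁ : ℝ) (u₁ p₁ q₁ : ℝ≥0∞) (σ₂ : ℝ) (u₂ p₂ q₂ : ℝ≥0∞)
    (hq₁ : 1 ≤ q₁) (hq₂ : 1 ≤ q₂)
    (hp₂0 : p₂ ≠ ∞ → 0 < p₂.toReal)
    (hmu : mu ≤ j)
    (cA : ℝ)
    (hA : ∀ (r : Fin d → Fin (2 ^ (j - mu))) (l : ℕ) (lam : DSeq d),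
      nNorm d σ₁ u₁ p₁ q₁ lam ≠ ∞ →
      (‖Afun d j mu r l lam‖₊ : ℝ≥0∞) ≤ rp cA * nNorm d σ₁ u₁ p₁ q₁ lam)
    (cY : ℝ)
    (hY : ∀ (r : Fin d → Fin (2 ^ (j - mu))) (l : ℕ),
      levelNorm d j u₂ p₂ (psi d j mu r l) ≤ rp cY) :
    (∃ a y, IsNuclearRepN d σ₁ u₁ p₁ q₁ σ₂ u₂ p₂ q₂ (levelProj d j) a y) ∧
    nucNormOpN d σ₁ u₁ p₁ q₁ σ₂ u₂ p₂ q₂ (levelProj d j) ≤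
      (2 : ℝ) ^ ((j : ℝ) * d + cA + ((j : ℝ) * (σ₂ - d * (u₂⁻¹).toReal) + cY)) := by
  classical
  set S := ((Fin d → Fin (2 ^ (j - mu))) × Fin (Kn d mu)) with hS
  set T := Fintype.card S with hT
  set eS := Fintype.equivFin S with heS
  set a : ℕ → (DSeq d →ₗ[ℂ] ℂ) := fun n =>
    if h : n < T then Afun d j mu (eS.symm ⟨n, h⟩).1 ((eS.symm ⟨n, h⟩).2 : ℕ) else 0 with ha
  set y : ℕ → DSeq d := fun n =>
    if h : n < T then Yseq d j mu (eS.symm ⟨n, h⟩).1 ((eS.symm ⟨n, h⟩).2 : ℕ) else 0 with hy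
  -- norms of y are finite
  have hYnorm : ∀ (r : Fin d → Fin (2 ^ (j - mu))) (l : ℕ),
      nNorm d σ₂ u₂ p₂ q₂ (Yseq d j mu r l)
        = (2 : ℝ≥0∞) ^ ((j : ℝ) * (σ₂ - d * (u₂⁻¹).toReal))
          * levelNorm d j u₂ p₂ (psi d j mu r l) := by
    intro r l
    rw [nNorm_single d j σ₂ u₂ p₂ q₂ hq₂ hp₂0 _ (fun i hi => Yseq_apply_ne d j mu r l hi),
      Yseq_apply_self]
  have hYle : ∀ (r : Fin d → Fin (2 ^ (j - mu))) (l : ℕ),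
      nNorm d σ₂ u₂ p₂ q₂ (Yseq d j mu r l)
        ≤ rp ((j : ℝ) * (σ₂ - d * (u₂⁻¹).toReal) + cY) := by
    intro r l
    rw [hYnorm r l, rp_add]
    exact mul_le_mul_right (hY r l) _
  have hzero : nNorm d σ₂ u₂ p₂ q₂ (fun _ _ => 0) = 0 :=
    nNorm_zero_fun d σ₂ u₂ p₂ q₂ hq₂ hp₂0
  have hyfin : ∀ n, nNorm d σ₂ u₂ p₂ q₂ (y n) ≠ ∞ := by
    intro n
    simp only [hy]
    split_ifs with h
    · exact ne_top_of_le_ne_top (rp_ne_top _) (hYle _ _)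
    · show nNorm d σ₂ u₂ p₂ q₂ (0 : DSeq d) ≠ ∞
      rw [show (0 : DSeq d) = (fun _ _ => 0) from rfl, hzero]
      exact ENNReal.zero_ne_top
  have hyzero : ∀ n, ¬ n < T → (nNorm d σ₂ u₂ p₂ q₂ (y n)).toReal = 0 := by
    intro n h
    simp only [hy, dif_neg h]
    rw [show (0 : DSeq d) = (fun _ _ => 0) from rfl, hzero]
    rfl
  -- reconstruction
  have hrecon : ∀ (lam : DSeq d) (N : ℕ), T ≤ N →
      ∑ n ∈ Finset.range N, a n lam • y n = (levelProj d j) lam := by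
    intro lam N hN
    have h1 : ∑ n ∈ Finset.range N, a n lam • y n = ∑ n ∈ Finset.range T, a n lam • y n := by
      refine (Finset.sum_subset (Finset.range_subset_range.mpr hN) ?_).symm
      intro x _ hx
      rw [Finset.mem_range, not_lt] at hx
      have hxx : ¬ x < T := not_lt.mpr hx
      simp only [ha, hy, dif_neg hxx]
      simp
    have h2 : ∑ n ∈ Finset.range T, a n lam • y n
        = ∑ i : Fin T, a (i : ℕ) lam • y (i : ℕ) :=
      (Fin.sum_univ_eq_sum_range (fun n => a n lam • y n) T).symm
    have h3 : ∑ i : Fin T, a (i : ℕ) lam • y (i : ℕ)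
        = ∑ s : S, Afun d j mu s.1 (s.2 : ℕ) lam • Yseq d j mu s.1 (s.2 : ℕ) := by
      rw [← Equiv.sum_comp eS.symm
        (fun s : S => Afun d j mu s.1 (s.2 : ℕ) lam • Yseq d j mu s.1 (s.2 : ℕ))]
      apply Finset.sum_congr rfl
      intro i _
      simp only [ha, hy, dif_pos i.isLt, Fin.eta]
    have h4 : ∑ s : S, Afun d j mu s.1 (s.2 : ℕ) lam • Yseq d j mu s.1 (s.2 : ℕ)
        = (levelProj d j) lam := by
      funext i k
      have happ : (∑ s : S, Afun d j mu s.1 (s.2 : ℕ) lam • Yseq d j mu s.1 (s.2 : ℕ)) i k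
          = ∑ s : S, Afun d j mu s.1 (s.2 : ℕ) lam * Yseq d j mu s.1 (s.2 : ℕ) i k := by
        simp only [Finset.sum_apply, Pi.smul_apply, smul_eq_mul]
      rw [happ]
      by_cases hi : i = j
      · subst hi
        have hYs : ∀ s : S, Yseq d i mu s.1 (s.2 : ℕ) i k = psi d i mu s.1 (s.2 : ℕ) k := by
          intro s
          rw [Yseq_apply_self]
        rw [Finset.sum_congr rfl (fun s _ => by rw [hYs s])]
        rw [Fintype.sum_prod_type]
        rw [recon d i mu lam k]
        show lam i k = (if i = i then lam i k else 0)
        rw [if_pos rfl]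
      · have hYs : ∀ s : S, Yseq d j mu s.1 (s.2 : ℕ) i k = 0 := by
          intro s
          rw [Yseq_apply_ne d j mu _ _ hi]
          rfl
        rw [Finset.sum_congr rfl (fun s _ => by rw [hYs s, mul_zero])]
        rw [Finset.sum_const_zero]
        show (0 : ℂ) = (if i = j then lam i k else 0)
        rw [if_neg hi]
    rw [h1, h2, h3, h4]
  have hrep : IsNuclearRepN d σ₁ u₁ p₁ q₁ σ₂ u₂ p₂ q₂ (levelProj d j) a y := by
    refine ⟨hyfin, ?_, ?_⟩
    · apply summable_of_ne_finset_zero (s := Finset.range T)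
      intro n hn
      rw [Finset.mem_range] at hn
      rw [hyzero n hn, mul_zero]
    · intro lam hlam
      apply tendsto_atTop_of_eventually_const (i₀ := T)
      intro N hN
      rw [hrecon lam N hN, sub_self]
      rw [show (0 : DSeq d) = (fun _ _ => 0) from rfl, hzero]
  refine ⟨⟨a, y, hrep⟩, ?_⟩
  -- the nuclear norm bound
  have hdn_le : ∀ n, nDualNorm d σ₁ u₁ p₁ q₁ (a n) ≤ (2 : ℝ) ^ cA := by
    intro n
    simp only [ha]
    split_ifs with h
    · exact nDualNorm_le d σ₁ u₁ p₁ q₁ _ cA (fun lam hlam => hA _ _ lam hlam)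
    · refine le_trans (le_of_eq ?_) (Real.rpow_pos_of_pos two_pos cA).le
      have : nDualNorm d σ₁ u₁ p₁ q₁ (0 : DSeq d →ₗ[ℂ] ℂ) ≤ 0 := by
        refine csInf_le ⟨0, fun x hx => hx.1⟩ ?_
        exact ⟨le_rfl, fun lam _ => by simp [ENNReal.toReal_nonneg]⟩
      exact le_antisymm this (nDualNorm_nonneg d σ₁ u₁ p₁ q₁ _)
  have hyn_le : ∀ n, (nNorm d σ₂ u₂ p₂ q₂ (y n)).toReal
      ≤ (2 : ℝ) ^ ((j : ℝ) * (σ₂ - d * (u₂⁻¹).toReal) + cY) := by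
    intro n
    simp only [hy]
    split_ifs with h
    · have := ENNReal.toReal_mono (rp_ne_top _) (hYle (eS.symm ⟨n, h⟩).1 ((eS.symm ⟨n, h⟩).2 : ℕ))
      rwa [rp_toReal] at this
    · rw [show (0 : DSeq d) = (fun _ _ => 0) from rfl, hzero]
      exact (Real.rpow_pos_of_pos two_pos _).le
  have htsum : (∑' n, nDualNorm d σ₁ u₁ p₁ q₁ (a n) * (nNorm d σ₂ u₂ p₂ q₂ (y n)).toReal)
      = ∑ n ∈ Finset.range T, nDualNorm d σ₁ u₁ p₁ q₁ (a n)
          * (nNorm d σ₂ u₂ p₂ q₂ (y n)).toReal := by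
    apply tsum_eq_sum
    intro n hn
    rw [Finset.mem_range] at hn
    rw [hyzero n hn, mul_zero]
  have hbound : (∑ n ∈ Finset.range T, nDualNorm d σ₁ u₁ p₁ q₁ (a n)
      * (nNorm d σ₂ u₂ p₂ q₂ (y n)).toReal)
      ≤ (2 : ℝ) ^ ((j : ℝ) * d + cA + ((j : ℝ) * (σ₂ - d * (u₂⁻¹).toReal) + cY)) := by
    have hterm : ∀ n ∈ Finset.range T, nDualNorm d σ₁ u₁ p₁ q₁ (a n)
        * (nNorm d σ₂ u₂ p₂ q₂ (y n)).toReal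
        ≤ (2 : ℝ) ^ cA * (2 : ℝ) ^ ((j : ℝ) * (σ₂ - d * (u₂⁻¹).toReal) + cY) := by
      intro n _
      exact mul_le_mul (hdn_le n) (hyn_le n) ENNReal.toReal_nonneg
        (Real.rpow_pos_of_pos two_pos _).le
    calc (∑ n ∈ Finset.range T, nDualNorm d σ₁ u₁ p₁ q₁ (a n)
        * (nNorm d σ₂ u₂ p₂ q₂ (y n)).toReal)
        ≤ ∑ _n ∈ Finset.range T, (2 : ℝ) ^ cA
            * (2 : ℝ) ^ ((j : ℝ) * (σ₂ - d * (u₂⁻¹).toReal) + cY) :=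
          Finset.sum_le_sum hterm
      _ = (T : ℝ) * ((2 : ℝ) ^ cA * (2 : ℝ) ^ ((j : ℝ) * (σ₂ - d * (u₂⁻¹).toReal) + cY)) := by
          rw [Finset.sum_const, Finset.card_range, nsmul_eq_mul]
      _ = (2 : ℝ) ^ ((j : ℝ) * d + cA + ((j : ℝ) * (σ₂ - d * (u₂⁻¹).toReal) + cY)) := by
          have hTnat : T = 2 ^ (j * d) := card_S d j mu hmu
          have hcast : ((j * d : ℕ) : ℝ) = (j : ℝ) * d := by push_cast; ring
          have hTval : (T : ℝ) = (2 : ℝ) ^ ((j : ℝ) * (d : ℝ)) := by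
            rw [hTnat, ← hcast, Real.rpow_natCast]
            push_cast
            ring
          rw [hTval]
          simp only [Real.rpow_add two_pos]
          ring
  have hmem : nucNormOpN d σ₁ u₁ p₁ q₁ σ₂ u₂ p₂ q₂ (levelProj d j)
      ≤ ∑' n, nDualNorm d σ₁ u₁ p₁ q₁ (a n) * (nNorm d σ₂ u₂ p₂ q₂ (y n)).toReal := by
    refine csInf_le ⟨0, ?_⟩ ⟨a, y, hrep, rfl⟩
    rintro c ⟨a', y', _, rfl⟩
    exact tsum_nonneg (fun n => mul_nonneg (nDualNorm_nonneg d σ₁ u₁ p₁ q₁ _)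
      ENNReal.toReal_nonneg)
  exact le_trans hmem (le_trans (le_of_eq htsum) hbound)

end Master


/-! ### composed dual bounds -/

section Dual

variable (d j mu : ℕ)

lemma Afun_dual_crude (σ₁ : ℝ) (u₁ p₁ q₁ : ℝ≥0∞) (hq₁ : 1 ≤ q₁) (hp₁1 : 1 ≤ p₁)
    (r : Fin d → Fin (2 ^ (j - mu))) (l : ℕ) (lam : DSeq d) :
    (‖Afun d j mu r l lam‖₊ : ℝ≥0∞)
      ≤ rp (-((j : ℝ) * (σ₁ - d * (u₁⁻¹).toReal))) * nNorm d σ₁ u₁ p₁ q₁ lam := by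
  have h2 : rp ((j : ℝ) * (σ₁ - d * (u₁⁻¹).toReal)) * levelNorm d j u₁ p₁ (lam j)
      ≤ nNorm d σ₁ u₁ p₁ q₁ lam := le_nNorm d j σ₁ u₁ p₁ q₁ hq₁ lam
  exact le_trans (Afun_le_crude d j mu u₁ p₁ hp₁1 r l lam) (rp_cancel h2)

lemma Afun_dual_holder (σ₁ : ℝ) (u₁ p₁ q₁ : ℝ≥0∞) (hq₁ : 1 ≤ q₁) (hp₁1 : 1 ≤ p₁)
    (hp₁ : p₁ ≠ ∞)
    (r : Fin d → Fin (2 ^ (j - mu))) (l : ℕ) (lam : DSeq d) :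
    (‖Afun d j mu r l lam‖₊ : ℝ≥0∞)
      ≤ rp ((-(((mu * d : ℕ) : ℝ) * (p₁⁻¹).toReal)
          + ((d * j : ℕ) : ℝ) * ((p₁⁻¹).toReal - (u₁⁻¹).toReal))
          + -((j : ℝ) * (σ₁ - d * (u₁⁻¹).toReal))) * nNorm d σ₁ u₁ p₁ q₁ lam := by
  have h2 : rp ((j : ℝ) * (σ₁ - d * (u₁⁻¹).toReal)) * levelNorm d j u₁ p₁ (lam j)
      ≤ nNorm d σ₁ u₁ p₁ q₁ lam := le_nNorm d j σ₁ u₁ p₁ q₁ hq₁ lam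
  have h3 := rp_cancel h2
  calc (‖Afun d j mu r l lam‖₊ : ℝ≥0∞)
      ≤ rp (-(((mu * d : ℕ) : ℝ) * (p₁⁻¹).toReal)
          + ((d * j : ℕ) : ℝ) * ((p₁⁻¹).toReal - (u₁⁻¹).toReal)) * levelNorm d j u₁ p₁ (lam j) :=
        Afun_le_holder d j mu u₁ p₁ hp₁1 hp₁ r l lam
    _ ≤ rp (-(((mu * d : ℕ) : ℝ) * (p₁⁻¹).toReal)
          + ((d * j : ℕ) : ℝ) * ((p₁⁻¹).toReal - (u₁⁻¹).toReal))
          * (rp (-((j : ℝ) * (σ₁ - d * (u₁⁻¹).toReal))) * nNorm d σ₁ u₁ p₁ q₁ lam) :=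
        mul_le_mul_right h3 _
    _ = _ := by rw [← mul_assoc, ← rp_add]

lemma toReal_inv_anti {p u : ℝ≥0∞} (hpu : p ≤ u) (hp0 : p ≠ 0) :
    (u⁻¹).toReal ≤ (p⁻¹).toReal :=
  ENNReal.toReal_mono (ENNReal.inv_ne_top.mpr hp0) (ENNReal.inv_le_inv.mpr hpu)

end Dual

set_option maxHeartbeats 1000000 in
theorem stmt14' (d : ℕ) (hd : 0 < d) (σ₁ σ₂ : ℝ) (u₁ p₁ q₁ u₂ p₂ q₂ : ℝ≥0∞)
    (hq₁ : 1 ≤ q₁) (hq₂ : 1 ≤ q₂)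
    (h₁ : (1 ≤ p₁ ∧ p₁ ≤ u₁ ∧ u₁ ≠ ∞) ∨ (p₁ = ∞ ∧ u₁ = ∞))
    (h₂ : (1 ≤ p₂ ∧ p₂ ≤ u₂ ∧ u₂ ≠ ∞) ∨ (p₂ = ∞ ∧ u₂ = ∞)) :
    ∃ C : ℝ, ∀ j : ℕ,
      (∃ a y, IsNuclearRepN d σ₁ u₁ p₁ q₁ σ₂ u₂ p₂ q₂ (levelProj d j) a y) ∧
      nucNormOpN d σ₁ u₁ p₁ q₁ σ₂ u₂ p₂ q₂ (levelProj d j) ≤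
        C * (2 : ℝ) ^ (-(j : ℝ) * (σ₁ - σ₂ - d * (u₁⁻¹).toReal + d * (u₂⁻¹).toReal)) *
          (2 : ℝ) ^ ((j : ℝ) * d * (1 - (u₁⁻¹ - min 1 (p₂ / p₁) / u₂).toReal)) := by
  classical
  have hp₂1 : 1 ≤ p₂ := by
    rcases h₂ with ⟨h, _, _⟩ | ⟨h, _⟩
    · exact h
    · rw [h]; exact le_top
  have hp₂u : p₂ ≤ u₂ := by
    rcases h₂ with ⟨_, h, _⟩ | ⟨h, h'⟩
    · exact h
    · rw [h, h']
  have hp₂inf : p₂ ≠ ∞ → u₂ ≠ ∞ := by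
    rcases h₂ with ⟨_, _, h⟩ | ⟨h, _⟩
    · exact fun _ => h
    · exact fun hh => absurd h hh
  have hp₂0ne : p₂ ≠ 0 := fun h => by rw [h] at hp₂1; simp at hp₂1
  have hp₂0 : p₂ ≠ ∞ → 0 < p₂.toReal := fun h => ENNReal.toReal_pos hp₂0ne h
  have hp₂infu : p₂ = ∞ → u₂ = ∞ := by
    intro h
    by_contra hu
    rcases h₂ with ⟨_, hle, _⟩ | ⟨_, h'⟩
    · rw [h] at hle
      exact hu (top_le_iff.mp hle)
    · exact hu h'
  have hp₁1 : 1 ≤ p₁ := by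
    rcases h₁ with ⟨h, _, _⟩ | ⟨h, _⟩
    · exact h
    · rw [h]; exact le_top
  have hbu0 : 0 ≤ (u₂⁻¹).toReal := ENNReal.toReal_nonneg
  have hbp0 : 0 ≤ (p₂⁻¹).toReal := ENNReal.toReal_nonneg
  have hap0 : 0 ≤ (p₁⁻¹).toReal := ENNReal.toReal_nonneg
  have hbu_le_bp : (u₂⁻¹).toReal ≤ (p₂⁻¹).toReal := toReal_inv_anti hp₂u hp₂0ne
  have hbp1 : (p₂⁻¹).toReal ≤ 1 := by
    calc (p₂⁻¹).toReal ≤ (1 : ℝ≥0∞).toReal :=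
          ENNReal.toReal_mono ENNReal.one_ne_top (ENNReal.inv_le_one.mpr hp₂1)
      _ = 1 := ENNReal.toReal_one
  refine ⟨(2 : ℝ) ^ (2 * (d : ℝ)), fun j => ?_⟩
  have final : ∀ mu : ℕ, mu ≤ j → ∀ cA cY : ℝ,
      (∀ (r : Fin d → Fin (2 ^ (j - mu))) (l : ℕ) (lam : DSeq d),
        nNorm d σ₁ u₁ p₁ q₁ lam ≠ ∞ →
        (‖Afun d j mu r l lam‖₊ : ℝ≥0∞) ≤ rp cA * nNorm d σ₁ u₁ p₁ q₁ lam) →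
      (∀ (r : Fin d → Fin (2 ^ (j - mu))) (l : ℕ),
        levelNorm d j u₂ p₂ (psi d j mu r l) ≤ rp cY) →
      ((j : ℝ) * d + cA + ((j : ℝ) * (σ₂ - d * (u₂⁻¹).toReal) + cY)
        ≤ 2 * (d : ℝ) + (-(j : ℝ) * (σ₁ - σ₂ - d * (u₁⁻¹).toReal + d * (u₂⁻¹).toReal))
          + (j : ℝ) * d * (1 - (u₁⁻¹ - min 1 (p₂ / p₁) / u₂).toReal)) →
      (∃ a y, IsNuclearRepN d σ₁ u₁ p₁ q₁ σ₂ u₂ p₂ q₂ (levelProj d j) a y) ∧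
      nucNormOpN d σ₁ u₁ p₁ q₁ σ₂ u₂ p₂ q₂ (levelProj d j) ≤
        (2 : ℝ) ^ (2 * (d : ℝ))
          * (2 : ℝ) ^ (-(j : ℝ) * (σ₁ - σ₂ - d * (u₁⁻¹).toReal + d * (u₂⁻¹).toReal))
          * (2 : ℝ) ^ ((j : ℝ) * d * (1 - (u₁⁻¹ - min 1 (p₂ / p₁) / u₂).toReal)) := by
    intro mu hmu cA cY hA hY hexp
    obtain ⟨hex, hnuc⟩ := master d j mu σ₁ u₁ p₁ q₁ σ₂ u₂ p₂ q₂ hq₁ hq₂ hp₂0 hmu cA hA cY hY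
    refine ⟨hex, le_trans hnuc ?_⟩
    rw [← Real.rpow_add two_pos, ← Real.rpow_add two_pos]
    exact (Real.rpow_le_rpow_left_iff one_lt_two).mpr hexp
  by_cases hxle : u₁⁻¹ ≤ min 1 (p₂ / p₁) / u₂
  · -- coordinate case : x = 0, mu = 0
    have hx0 : (u₁⁻¹ - min 1 (p₂ / p₁) / u₂).toReal = 0 := by
      rw [tsub_eq_zero_of_le hxle]
      rfl
    refine final 0 (Nat.zero_le j) (-((j : ℝ) * (σ₁ - d * (u₁⁻¹).toReal))) _
      (fun r l lam _ => Afun_dual_crude d j 0 σ₁ u₁ p₁ q₁ hq₁ hp₁1 r l lam)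
      (fun r l => levelNorm_psi_le d j 0 u₂ p₂ hp₂1 hp₂u hp₂infu (Nat.zero_le j) r l) ?_
    have hcY : max ((d : ℝ) * j * ((u₂⁻¹).toReal - (p₂⁻¹).toReal)
        + (d : ℝ) * ((0 : ℕ) : ℝ) * (p₂⁻¹).toReal) 0 ≤ 0 := by
      apply max_le _ le_rfl
      push_cast
      nlinarith [mul_nonneg (Nat.cast_nonneg (α := ℝ) d) (Nat.cast_nonneg (α := ℝ) j)]
    rw [hx0]
    nlinarith [Nat.cast_nonneg (α := ℝ) d]
  · -- Fourier cases
    have hlt : min 1 (p₂ / p₁) / u₂ < u₁⁻¹ := not_le.mp hxle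
    have hu₁inv0 : u₁⁻¹ ≠ 0 := fun h => by rw [h] at hlt; exact absurd hlt (by simp)
    have hu₁ : u₁ ≠ ∞ := ENNReal.inv_ne_zero.mp hu₁inv0
    have h₁' : 1 ≤ p₁ ∧ p₁ ≤ u₁ ∧ u₁ ≠ ∞ := by
      rcases h₁ with h | ⟨_, h⟩
      · exact h
      · exact absurd h hu₁
    obtain ⟨hp₁1', hp₁u, -⟩ := h₁'
    have hp₁ne : p₁ ≠ ∞ := fun h => hu₁ (top_le_iff.mp (h ▸ hp₁u))
    have hp₁0ne : p₁ ≠ 0 := fun h => by rw [h] at hp₁1; simp at hp₁1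
    have hu₁0ne : u₁ ≠ 0 := fun h => by
      rw [h] at hp₁u
      exact hp₁0ne (le_zero_iff.mp hp₁u)
    have hau_ne : u₁⁻¹ ≠ ∞ := ENNReal.inv_ne_top.mpr hu₁0ne
    have hxval : (u₁⁻¹ - min 1 (p₂ / p₁) / u₂).toReal
        = (u₁⁻¹).toReal - (min 1 (p₂ / p₁) / u₂).toReal :=
      ENNReal.toReal_sub_of_le hlt.le hau_ne
    by_cases hpp : p₁ ≤ p₂
    · -- full Fourier, mu = j
      have hmin : min 1 (p₂ / p₁) = 1 := by
        refine min_eq_left ?_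
        rw [ENNReal.le_div_iff_mul_le (Or.inl hp₁0ne) (Or.inl hp₁ne), one_mul]
        exact hpp
      have hxval2 : (u₁⁻¹ - min 1 (p₂ / p₁) / u₂).toReal
          = (u₁⁻¹).toReal - (u₂⁻¹).toReal := by
        rw [hxval, hmin, one_div]
      refine final j le_rfl _ _
        (fun r l lam _ => Afun_dual_holder d j j σ₁ u₁ p₁ q₁ hq₁ hp₁1 hp₁ne r l lam)
        (fun r l => levelNorm_psi_le d j j u₂ p₂ hp₂1 hp₂u hp₂infu le_rfl r l) ?_
      have hcY : max ((d : ℝ) * j * ((u₂⁻¹).toReal - (p₂⁻¹).toReal)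
          + (d : ℝ) * (j : ℝ) * (p₂⁻¹).toReal) 0 ≤ (d : ℝ) * j * (u₂⁻¹).toReal := by
        apply max_le (by nlinarith) (by positivity)
      rw [hxval2]
      push_cast
      nlinarith [Nat.cast_nonneg (α := ℝ) d]
    · -- sparse Fourier
      have hp₂le : p₂ ≤ p₁ := (not_le.mp hpp).le
      have hp₂ne : p₂ ≠ ∞ := by
        intro h
        rw [h] at hp₂le
        exact hp₁ne (top_le_iff.mp hp₂le)
      have hu₂ne : u₂ ≠ ∞ := hp₂inf hp₂ne
      have hu₂0ne : u₂ ≠ 0 := fun h => by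
        rw [h] at hp₂u
        exact hp₂0ne (le_zero_iff.mp hp₂u)
      have hp₂t : 0 < p₂.toReal := hp₂0 hp₂ne
      have hu₂t : 0 < u₂.toReal := ENNReal.toReal_pos hu₂0ne hu₂ne
      have hp₁t : 0 < p₁.toReal := ENNReal.toReal_pos hp₁0ne hp₁ne
      have hτval : (p₂ / u₂).toReal = p₂.toReal / u₂.toReal := ENNReal.toReal_div p₂ u₂
      have hτ0 : 0 ≤ (p₂ / u₂).toReal := ENNReal.toReal_nonneg
      have hτ1 : (p₂ / u₂).toReal ≤ 1 := by
        rw [hτval]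
        exact div_le_one_of_le₀ (ENNReal.toReal_mono hu₂ne hp₂u) hu₂t.le
      have hτbp : (p₂ / u₂).toReal * (p₂⁻¹).toReal = (u₂⁻¹).toReal := by
        rw [hτval, ENNReal.toReal_inv, ENNReal.toReal_inv]
        field_simp
      have hmu_nonneg : 0 ≤ (j : ℝ) * (1 - (p₂ / u₂).toReal) := by
        nlinarith [Nat.cast_nonneg (α := ℝ) j]
      have hmu_le : ⌈(j : ℝ) * (1 - (p₂ / u₂).toReal)⌉₊ ≤ j := by
        refine Nat.ceil_le.mpr ?_
        nlinarith [Nat.cast_nonneg (α := ℝ) j]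
      have hmu_ge : (j : ℝ) * (1 - (p₂ / u₂).toReal)
          ≤ (⌈(j : ℝ) * (1 - (p₂ / u₂).toReal)⌉₊ : ℝ) := Nat.le_ceil _
      have hmu_lt : ((⌈(j : ℝ) * (1 - (p₂ / u₂).toReal)⌉₊ : ℕ) : ℝ)
          ≤ (j : ℝ) * (1 - (p₂ / u₂).toReal) + 1 :=
        (Nat.ceil_lt_add_one hmu_nonneg).le
      have hmin : min 1 (p₂ / p₁) = p₂ / p₁ := by
        refine min_eq_right ?_
        calc p₂ / p₁ ≤ p₁ / p₁ := ENNReal.div_le_div_right hp₂le p₁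
          _ = 1 := ENNReal.div_self hp₁0ne hp₁ne
      have hBval : ((p₂ / p₁) / u₂).toReal = (p₂ / u₂).toReal * (p₁⁻¹).toReal := by
        rw [ENNReal.toReal_div, ENNReal.toReal_div, hτval, ENNReal.toReal_inv,
          div_div, mul_comm p₁.toReal u₂.toReal, ← div_div, div_eq_mul_inv]
      have hxval2 : (u₁⁻¹ - min 1 (p₂ / p₁) / u₂).toReal
          = (u₁⁻¹).toReal - (p₂ / u₂).toReal * (p₁⁻¹).toReal := by
        rw [hxval, hmin, hBval]
      refine final ⌈(j : ℝ) * (1 - (p₂ / u₂).toReal)⌉₊ hmu_le _ _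
        (fun r l lam _ => Afun_dual_holder d j _ σ₁ u₁ p₁ q₁ hq₁ hp₁1 hp₁ne r l lam)
        (fun r l => levelNorm_psi_le d j _ u₂ p₂ hp₂1 hp₂u hp₂infu hmu_le r l) ?_
      have hcY : max ((d : ℝ) * j * ((u₂⁻¹).toReal - (p₂⁻¹).toReal)
          + (d : ℝ) * (⌈(j : ℝ) * (1 - (p₂ / u₂).toReal)⌉₊ : ℝ) * (p₂⁻¹).toReal) 0
          ≤ (d : ℝ) * (p₂⁻¹).toReal := by
        refine max_le ?_ (by positivity)
        have h1 : (d : ℝ) * (⌈(j : ℝ) * (1 - (p₂ / u₂).toReal)⌉₊ : ℝ) * (p₂⁻¹).toReal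
            ≤ (d : ℝ) * ((j : ℝ) * (1 - (p₂ / u₂).toReal) + 1) * (p₂⁻¹).toReal := by
          have := mul_le_mul_of_nonneg_left hmu_lt (Nat.cast_nonneg (α := ℝ) d)
          exact mul_le_mul_of_nonneg_right this hbp0
        have h2 : (d : ℝ) * (j : ℝ) * ((p₂ / u₂).toReal * (p₂⁻¹).toReal)
            = (d : ℝ) * (j : ℝ) * (u₂⁻¹).toReal := by rw [hτbp]
        nlinarith [Nat.cast_nonneg (α := ℝ) d, Nat.cast_nonneg (α := ℝ) j]
      rw [hxval2]
      push_cast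
      nlinarith [mul_nonneg (mul_nonneg (Nat.cast_nonneg (α := ℝ) d) hap0)
        (sub_nonneg.mpr hmu_ge), Nat.cast_nonneg (α := ℝ) d]

end Stmt14Aux

/-- each level projection `Id_j : ñ^{σ₁}_{u₁,p₁,q₁} → ñ^{σ₂}_{u₂,p₂,q₂}`
is nuclear, with `ν(Id_j) ≤ C 2^{-jδ} 2^{jd(1 - (1/u₁ - min{1,p₂/p₁}/u₂)₊)}` for a
constant `C` independent of `j`, where `δ = σ₁ - σ₂ - d/u₁ + d/u₂`. -/
theorem stmt14 (d : ℕ) (hd : 0 < d) (σ₁ σ₂ : ℝ) (u₁ p₁ q₁ u₂ p₂ q₂ : ℝ≥0∞)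
    (hq₁ : 1 ≤ q₁) (hq₂ : 1 ≤ q₂)
    (h₁ : (1 ≤ p₁ ∧ p₁ ≤ u₁ ∧ u₁ ≠ ∞) ∨ (p₁ = ∞ ∧ u₁ = ∞))
    (h₂ : (1 ≤ p₂ ∧ p₂ ≤ u₂ ∧ u₂ ≠ ∞) ∨ (p₂ = ∞ ∧ u₂ = ∞)) :
    ∃ C : ℝ, ∀ j : ℕ,
      (∃ a y, IsNuclearRepN d σ₁ u₁ p₁ q₁ σ₂ u₂ p₂ q₂ (levelProj d j) a y) ∧
      nucNormOpN d σ₁ u₁ p₁ q₁ σ₂ u₂ p₂ q₂ (levelProj d j) ≤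
        C * (2 : ℝ) ^ (-(j : ℝ) * (σ₁ - σ₂ - d * (u₁⁻¹).toReal + d * (u₂⁻¹).toReal)) *
          (2 : ℝ) ^ ((j : ℝ) * d * (1 - (u₁⁻¹ - min 1 (p₂ / p₁) / u₂).toReal)) := by
  exact Stmt14Aux.stmt14' d hd σ₁ σ₂ u₁ p₁ q₁ u₂ p₂ q₂ hq₁ hq₂ h₁ h₂
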